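/- Let F ∈ D_a with μ_n := −ln|a_n| strictly increasing and ∑_n 1/(μ_{n+1} − μ_n) < +∞, let δ > 0, and let Δ_n, τ_k be as defined (so τ_k < 0 for k ≥ 1). Suppose σ < 0 and k ≥ 1 are such that λ_n + σ(μ_n + Δ_n) ≤ λ_k + σ(μ_k + Δ_k) for all n ≥ 0. Then for x := 1/( |σ| (1 + |τ_k|) ) one has, for every n ≥ 0, |a_n| e^{x λ_n} ≤ |a_k| e^{x λ_k} · exp( −δ |n−k| / (1 + |τ_k|) ); in particular μ(x,F) = |a_k| e^{x λ_k} and ν(x,F) = k. -/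

import Mathlib

open Filter

/-- `Del δ μ n` is `Δ_n := δ ∑_{j=0}^{n-1} (μ_{j+1} - μ_j)
    ∑_{m=j+1}^∞ ( 1/(μ_m − μ_{m−1}) + 1/(μ_{m+1} − μ_m) )`; in particular `Δ_0 = 0`. -/
noncomputable def Del (δ : ℝ) (μ : ℕ → ℝ) (n : ℕ) : ℝ :=
  δ * ∑ j ∈ Finset.range n, (μ (j + 1) - μ j) *
    ∑' i : ℕ, (1 / (μ (j + 1 + i) - μ (j + i)) + 1 / (μ (j + 2 + i) - μ (j + 1 + i)))

/-- `tk δ μ k` is `t_k := (Δ_{k−1} − Δ_k)/(μ_k − μ_{k−1})` (for `k ≥ 1`). -/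
noncomputable def tk (δ : ℝ) (μ : ℕ → ℝ) (k : ℕ) : ℝ :=
  (Del δ μ (k - 1) - Del δ μ k) / (μ k - μ (k - 1))

/-- `tauk δ μ k` is `τ_k := t_k + δ/(μ_k − μ_{k−1})` (for `k ≥ 1`). -/
noncomputable def tauk (δ : ℝ) (μ : ℕ → ℝ) (k : ℕ) : ℝ :=
  tk δ μ k + δ / (μ k - μ (k - 1))

/-- gap reciprocal -/
noncomputable def fgap (μ : ℕ → ℝ) (n : ℕ) : ℝ := 1 / (μ (n + 1) - μ n)

/-- tail sum -/
noncomputable def Ssum (μ : ℕ → ℝ) (j : ℕ) : ℝ := ∑' i : ℕ, (fgap μ (j + i) + fgap μ (j + i + 1))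

lemma fgap_pos {μ : ℕ → ℝ} (hμmono : StrictMono μ) (n : ℕ) : 0 < fgap μ n :=
  one_div_pos.2 (sub_pos.2 (hμmono (Nat.lt_succ_self n)))

lemma summable_sh {μ : ℕ → ℝ} (hsum : Summable fun n => 1 / (μ (n + 1) - μ n)) (j : ℕ) :
    Summable (fun i => fgap μ (j + i) + fgap μ (j + i + 1)) := by
  have h1 : Summable (fun i => fgap μ (i + j)) := (summable_nat_add_iff j).2 hsum
  have h2 : Summable (fun i => fgap μ (i + (j + 1))) := (summable_nat_add_iff (j + 1)).2 hsum
  have h1' : Summable (fun i => fgap μ (j + i)) := by simpa [add_comm] using h1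
  have h2' : Summable (fun i => fgap μ (j + i + 1)) := by
    refine h2.congr fun i => ?_
    congr 1; omega
  exact h1'.add h2'

lemma Ssum_nonneg {μ : ℕ → ℝ} (hμmono : StrictMono μ) (j : ℕ) : 0 ≤ Ssum μ j :=
  tsum_nonneg fun i => le_of_lt (add_pos (fgap_pos hμmono _) (fgap_pos hμmono _))

lemma Ssum_rec {μ : ℕ → ℝ} (hsum : Summable fun n => 1 / (μ (n + 1) - μ n)) (j : ℕ) : Ssum μ j = fgap μ j + fgap μ (j + 1) + Ssum μ (j + 1) := by
  have h := Summable.tsum_eq_zero_add (summable_sh hsum j)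
  rw [Ssum, h]
  have h2 : (∑' i : ℕ, (fgap μ (j + (i + 1)) + fgap μ (j + (i + 1) + 1))) = Ssum μ (j + 1) := by
    rw [Ssum]
    refine tsum_congr fun i => ?_
    have e : j + (i + 1) = j + 1 + i := by omega
    rw [e]
  simp only [Nat.add_zero] at *
  rw [h2]

lemma Del_eq {μ : ℕ → ℝ} (δ : ℝ) (n : ℕ) :
    Del δ μ n = δ * ∑ j ∈ Finset.range n, (μ (j + 1) - μ j) * Ssum μ j := by
  rw [Del]
  congr 1
  refine Finset.sum_congr rfl fun j _ => ?_
  congr 1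
  refine tsum_congr fun i => ?_
  have e1 : j + 1 + i = j + i + 1 := by omega
  have e2 : j + 2 + i = j + i + 1 + 1 := by omega
  rw [e1, e2]; rfl

/-- If `k` is the index of the maximal term of `f*` at `σ < 0` (i.e.
`λ_n + σ μ*_n ≤ λ_k + σ μ*_k` for all `n`, where `μ*_n = μ_n + Δ_n`), then at the point
`x := 1/(|σ|(1+|τ_k|))` one has `|a_n| e^{xλ_n} ≤ |a_k| e^{xλ_k} e^{−δ|n−k|/(1+|τ_k|)}`
for all `n`; in particular `μ(x,F) = |a_k| e^{xλ_k}` and `ν(x,F) = k`. -/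
theorem stmt_13 (a : ℕ → ℂ) (lam : ℕ → ℝ)
    (hdist : ∀ n m, n ≠ m → lam n ≠ lam m)
    (hlam0 : ∀ n, 0 ≤ lam n)
    (hlamsup : ∀ n, ∃ m, lam n < lam m)
    (hne : ∀ n, a n ≠ 0) (n0 : ℕ)
    (hdec : ∀ n ≥ n0, ‖a (n + 1)‖ < ‖a n‖)
    (hto0 : Tendsto (fun n => ‖a n‖) atTop (nhds 0))
    (μ : ℕ → ℝ) (hμ : ∀ n, μ n = -Real.log (‖a n‖))
    (hμmono : StrictMono μ)
    (hsum : Summable fun n => 1 / (μ (n + 1) - μ n))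
    (δ : ℝ) (hδ : 0 < δ)
    (σ : ℝ) (hσ : σ < 0) (k : ℕ) (hk : 1 ≤ k)
    (hmax : ∀ n, lam n + σ * (μ n + Del δ μ n) ≤ lam k + σ * (μ k + Del δ μ k)) :
    (∀ n, ‖a n‖ * Real.exp ((1 / (|σ| * (1 + |tauk δ μ k|))) * lam n) ≤
        ‖a k‖ * Real.exp ((1 / (|σ| * (1 + |tauk δ μ k|))) * lam k) *
          Real.exp (-δ * |(n : ℝ) - (k : ℝ)| / (1 + |tauk δ μ k|))) ∧
    IsGreatest
      (Set.range fun n =>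
        ‖a n‖ * Real.exp ((1 / (|σ| * (1 + |tauk δ μ k|))) * lam n))
      (‖a k‖ * Real.exp ((1 / (|σ| * (1 + |tauk δ μ k|))) * lam k)) ∧
    (∀ n, ‖a n‖ * Real.exp ((1 / (|σ| * (1 + |tauk δ μ k|))) * lam n) =
        ‖a k‖ * Real.exp ((1 / (|σ| * (1 + |tauk δ μ k|))) * lam k) → n ≤ k) := by
  have habs : ∀ n, ‖a n‖ = Real.exp (-μ n) := fun n => by
    rw [hμ, neg_neg, Real.exp_log (norm_pos_iff.mpr (hne n))]
  have hμd : ∀ n, 0 < μ (n + 1) - μ n := fun n => sub_pos.2 (hμmono (Nat.lt_succ_self n))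
  have hf : ∀ n, fgap μ n * (μ (n + 1) - μ n) = 1 := fun n =>
    one_div_mul_cancel (ne_of_gt (hμd n))
  set C : ℝ := δ * (fgap μ k + Ssum μ k) with hCdef
  have hCpos : 0 < C :=
    mul_pos hδ (add_pos_of_pos_of_nonneg (fgap_pos hμmono k) (Ssum_nonneg hμmono k))
  -- τ_k = -C
  have hkk : k - 1 + 1 = k := by omega
  have hDelstep : ∀ n, Del δ μ (n + 1) = Del δ μ n + δ * ((μ (n + 1) - μ n) * Ssum μ n) := by
    intro n
    rw [Del_eq, Del_eq, Finset.sum_range_succ, mul_add]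
  have htau : tauk δ μ k = -C := by
    have h1 : Del δ μ k = Del δ μ (k - 1) + δ * ((μ k - μ (k - 1)) * Ssum μ (k - 1)) := by
      have := hDelstep (k - 1)
      rwa [hkk] at this
    have hrec : Ssum μ (k - 1) = fgap μ (k - 1) + fgap μ k + Ssum μ k := by
      have := Ssum_rec hsum (k - 1)
      rwa [hkk] at this
    have hfg : fgap μ (k - 1) = 1 / (μ k - μ (k - 1)) := by rw [fgap, hkk]
    have hd : (0:ℝ) < μ k - μ (k - 1) := by
      have : μ (k - 1) < μ k := hμmono (by omega)
      linarith
    have hδd : δ / (μ k - μ (k - 1)) = δ * fgap μ (k - 1) := by rw [hfg]; ring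
    rw [tauk, tk, h1]
    have e1 : Del δ μ (k - 1) - (Del δ μ (k - 1) + δ * ((μ k - μ (k - 1)) * Ssum μ (k - 1))) =
        -(δ * Ssum μ (k - 1)) * (μ k - μ (k - 1)) := by ring
    rw [e1, mul_div_assoc, div_self (ne_of_gt hd), mul_one, hδd, hrec, hCdef]
    ring
  have htabs : |tauk δ μ k| = C := by rw [htau, abs_neg, abs_of_pos hCpos]
  have h1C : (0:ℝ) < 1 + C := by linarith
  -- antitone facts
  have hanti : Antitone (fun j => Ssum μ j + fgap μ j) := by
    refine antitone_nat_of_succ_le fun j => ?_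
    have := Ssum_rec hsum j
    have := fgap_pos hμmono j
    show Ssum μ (j + 1) + fgap μ (j + 1) ≤ Ssum μ j + fgap μ j
    linarith
  have hanti2 : Antitone (fun j => Ssum μ j - fgap μ j) := by
    refine antitone_nat_of_succ_le fun j => ?_
    have := Ssum_rec hsum j
    have := fgap_pos hμmono (j + 1)
    show Ssum μ (j + 1) - fgap μ (j + 1) ≤ Ssum μ j - fgap μ j
    linarith
  -- key inequality
  have key : ∀ n, Del δ μ n - Del δ μ k + δ * |(n : ℝ) - k| ≤ C * (μ n - μ k) := by
    intro n
    rcases le_or_gt k n with hkn | hnk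
    · have habsnk : |(n : ℝ) - k| = (n : ℝ) - k := by
        rw [abs_of_nonneg]
        have : (k:ℝ) ≤ n := Nat.cast_le.2 hkn
        linarith
      rw [habsnk]
      clear habsnk
      induction n, hkn using Nat.le_induction with
      | base => simp
      | succ n hkn ih =>
        have hstep := hDelstep n
        have hh : Ssum μ n + fgap μ n ≤ Ssum μ k + fgap μ k := hanti hkn
        have hd := hμd n
        have hfn := hf n
        have hC1 : C * (μ (n + 1) - μ n) ≥ δ * ((μ (n + 1) - μ n) * Ssum μ n) + δ := by
          have h2 : δ * ((Ssum μ n + fgap μ n) * (μ (n + 1) - μ n)) ≤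
              δ * ((Ssum μ k + fgap μ k) * (μ (n + 1) - μ n)) := by
            apply mul_le_mul_of_nonneg_left _ (le_of_lt hδ)
            exact mul_le_mul_of_nonneg_right hh (le_of_lt hd)
          calc δ * ((μ (n + 1) - μ n) * Ssum μ n) + δ
              = δ * ((Ssum μ n + fgap μ n) * (μ (n + 1) - μ n)) := by
                rw [add_mul, mul_add]; rw [mul_comm (fgap μ n)] at *
                rw [hfn]; ring
            _ ≤ δ * ((Ssum μ k + fgap μ k) * (μ (n + 1) - μ n)) := h2
            _ = C * (μ (n + 1) - μ n) := by rw [hCdef]; ring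
        push_cast
        linarith
    · -- n < k
      have habsnk : |(n : ℝ) - k| = (k : ℝ) - n := by
        rw [abs_of_nonpos]
        · ring
        have : (n:ℝ) ≤ k := Nat.cast_le.2 (le_of_lt hnk)
        linarith
      rw [habsnk]
      have haux : ∀ m : ℕ, ∀ nn : ℕ, nn + m = k →
          C * (μ k - μ nn) ≤ Del δ μ k - Del δ μ nn - δ * m := by
        intro m
        induction m with
        | zero => intro nn hnn; subst hnn; push_cast; simp
        | succ m ih =>
          intro nn hnn
          have h1 : nn + 1 + m = k := by omega
          have ih' := ih (nn + 1) h1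
          have hstep := hDelstep nn
          have hnnk : nn + 1 ≤ k := by omega
          have hh : Ssum μ (k - 1) - fgap μ (k - 1) ≤ Ssum μ nn - fgap μ nn :=
            hanti2 (by omega)
          have hrec : Ssum μ (k - 1) = fgap μ (k - 1) + fgap μ k + Ssum μ k := by
            have := Ssum_rec hsum (k - 1)
            rwa [hkk] at this
          have hh' : fgap μ k + Ssum μ k ≤ Ssum μ nn - fgap μ nn := by
            rw [hrec] at hh; linarith
          have hd := hμd nn
          have hfn := hf nn
          have hC1 : C * (μ (nn + 1) - μ nn) ≤ δ * ((μ (nn + 1) - μ nn) * Ssum μ nn) - δ := by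
            have h2 : δ * ((fgap μ k + Ssum μ k) * (μ (nn + 1) - μ nn)) ≤
                δ * ((Ssum μ nn - fgap μ nn) * (μ (nn + 1) - μ nn)) := by
              apply mul_le_mul_of_nonneg_left _ (le_of_lt hδ)
              exact mul_le_mul_of_nonneg_right hh' (le_of_lt hd)
            calc C * (μ (nn + 1) - μ nn)
                = δ * ((fgap μ k + Ssum μ k) * (μ (nn + 1) - μ nn)) := by rw [hCdef]; ring
              _ ≤ δ * ((Ssum μ nn - fgap μ nn) * (μ (nn + 1) - μ nn)) := h2
              _ = δ * ((μ (nn + 1) - μ nn) * Ssum μ nn) - δ := by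
                  rw [sub_mul, mul_sub]
                  rw [mul_comm (fgap μ nn)] at *
                  rw [hfn]; ring
          push_cast
          linarith
      have := haux (k - n) n (by omega)
      have hcast : ((k - n : ℕ) : ℝ) = (k : ℝ) - n := by
        push_cast [Nat.cast_sub (le_of_lt hnk)]; ring
      rw [hcast] at this
      linarith
  -- main pointwise inequality at log level
  set x : ℝ := 1 / (|σ| * (1 + |tauk δ μ k|)) with hxdef
  have hσa : |σ| = -σ := abs_of_neg hσ
  have hσpos : (0:ℝ) < -σ := by linarith
  have hx : x = 1 / ((-σ) * (1 + C)) := by rw [hxdef, hσa, htabs]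
  have hxpos : 0 < x := by rw [hx]; positivity
  have hxs : x * (-σ) = 1 / (1 + C) := by
    rw [hx]; field_simp
    exact div_self (ne_of_lt hσ)
  have main : ∀ n, -μ n + x * lam n ≤ -μ k + x * lam k - δ * |(n : ℝ) - k| / (1 + C) := by
    intro n
    have h1 : lam n - lam k ≤ (-σ) * ((μ n + Del δ μ n) - (μ k + Del δ μ k)) := by
      have := hmax n; nlinarith
    have h2 : (μ n + Del δ μ n) - (μ k + Del δ μ k) ≤
        (1 + C) * (μ n - μ k) - δ * |(n : ℝ) - k| := by
      have := key n; nlinarith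
    have h3 : x * (lam n - lam k) ≤ x * ((-σ) * ((μ n + Del δ μ n) - (μ k + Del δ μ k))) :=
      mul_le_mul_of_nonneg_left h1 (le_of_lt hxpos)
    have h4 : x * ((-σ) * ((μ n + Del δ μ n) - (μ k + Del δ μ k))) ≤
        x * ((-σ) * ((1 + C) * (μ n - μ k) - δ * |(n : ℝ) - k|)) := by
      apply mul_le_mul_of_nonneg_left _ (le_of_lt hxpos)
      exact mul_le_mul_of_nonneg_left h2 (le_of_lt hσpos)
    have h5 : x * ((-σ) * ((1 + C) * (μ n - μ k) - δ * |(n : ℝ) - k|)) =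
        (μ n - μ k) - δ * |(n : ℝ) - k| / (1 + C) := by
      rw [← mul_assoc, hxs]
      field_simp
    have h6 : x * lam n - x * lam k = x * (lam n - lam k) := by ring
    linarith [h3, h4, h5, h6]
  -- exponential form
  have hval : ∀ n, ‖a n‖ * Real.exp (x * lam n) = Real.exp (-μ n + x * lam n) := by
    intro n; rw [habs, Real.exp_add]
  have part1 : ∀ n, ‖a n‖ * Real.exp (x * lam n) ≤
      ‖a k‖ * Real.exp (x * lam k) *
        Real.exp (-δ * |(n : ℝ) - k| / (1 + |tauk δ μ k|)) := by
    intro n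
    rw [hval, hval, ← Real.exp_add, htabs]
    apply Real.exp_le_exp.2
    have := main n
    have : -δ * |(n : ℝ) - k| / (1 + C) = -(δ * |(n : ℝ) - k| / (1 + C)) := by ring
    rw [this]
    have := main n
    linarith
  have hexple1 : ∀ n : ℕ, Real.exp (-δ * |(n : ℝ) - k| / (1 + |tauk δ μ k|)) ≤ 1 := by
    intro n
    rw [Real.exp_le_one_iff, htabs]
    apply div_nonpos_of_nonpos_of_nonneg
    · have : 0 ≤ |(n : ℝ) - k| := abs_nonneg _
      nlinarith
    · linarith
  have hvkpos : 0 < ‖a k‖ * Real.exp (x * lam k) :=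
    mul_pos (norm_pos_iff.mpr (hne k)) (Real.exp_pos _)
  refine ⟨part1, ⟨⟨k, by simp⟩, ?_⟩, ?_⟩
  · rintro y ⟨n, rfl⟩
    calc ‖a n‖ * Real.exp (x * lam n)
        ≤ ‖a k‖ * Real.exp (x * lam k) *
            Real.exp (-δ * |(n : ℝ) - k| / (1 + |tauk δ μ k|)) := part1 n
      _ ≤ ‖a k‖ * Real.exp (x * lam k) * 1 :=
          mul_le_mul_of_nonneg_left (hexple1 n) (le_of_lt hvkpos)
      _ = _ := mul_one _
  · intro n heq
    by_contra hcon
    push_neg at hcon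
    have h1 : (1:ℝ) ≤ |(n : ℝ) - k| := by
      have hnk : (k:ℝ) + 1 ≤ n := by exact_mod_cast Nat.succ_le_of_lt hcon
      rw [abs_of_pos (by linarith)]
      linarith
    have hlt : Real.exp (-δ * |(n : ℝ) - k| / (1 + |tauk δ μ k|)) < 1 := by
      rw [Real.exp_lt_one_iff, htabs]
      apply div_neg_of_neg_of_pos _ h1C
      nlinarith [hδ, h1]
    have hle := part1 n
    have h2 : ‖a k‖ * Real.exp (x * lam k) *
        Real.exp (-δ * |(n : ℝ) - k| / (1 + |tauk δ μ k|)) <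
        ‖a k‖ * Real.exp (x * lam k) * 1 :=
      mul_lt_mul_of_pos_left hlt hvkpos
    rw [mul_one] at h2
    rw [heq] at hle
    linarith
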